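/- Let γ ∈ H²(S¹, ℝⁿ) be an immersion, let {T(0), ν₁⁰, …, ν_{n−1}⁰} be an orthonormal basis of ℝⁿ with T(0) = γ'(0)/|γ'(0)|, and let νᵢ solve the linear ODE νᵢ' = −⟨νᵢ, γ''⟩γ'/|γ'|² with νᵢ(0) = νᵢ⁰. Then for all u ∈ S¹: ⟨γ'(u), νᵢ(u)⟩ = 0 and ⟨νᵢ(u), νⱼ(u)⟩ = δᵢⱼ, i.e. {γ'(u)/|γ'(u)|, ν₁(u), …, ν_{n−1}(u)} is an orthonormal frame along γ. -/

import Mathlib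

open scoped RealInnerProductSpace
noncomputable section

/-- the parallel-type ODE νᵢ' = −⟨νᵢ, γ''⟩γ'/|γ'|² propagates an orthonormal
frame: if {T(0), ν₁(0), …, ν_{n−1}(0)} is orthonormal, then for every u the vectors νᵢ(u)
are orthonormal and orthogonal to γ'(u). -/
theorem orthonormal_frame_ode (n : ℕ) (γ : ℝ → EuclideanSpace ℝ (Fin n))
    (hγ : ContDiff ℝ 2 γ) (himm : ∀ u, 0 < ‖deriv γ u‖)
    (ν : Fin (n - 1) → ℝ → EuclideanSpace ℝ (Fin n))
    (hODE : ∀ i u, HasDerivAt (ν i)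
      (-((⟪ν i u, deriv (deriv γ) u⟫ / ‖deriv γ u‖ ^ 2) • deriv γ u)) u)
    (hT0 : ∀ i, ⟪deriv γ 0, ν i 0⟫ = 0)
    (hON0 : ∀ i j, ⟪ν i 0, ν j 0⟫ = if i = j then 1 else 0) :
    ∀ u : ℝ, (∀ i, ⟪deriv γ u, ν i u⟫ = 0) ∧
      (∀ i j, ⟪ν i u, ν j u⟫ = if i = j then 1 else 0) := by
  have hdγ : ∀ u, HasDerivAt (deriv γ) (deriv (deriv γ) u) u := by
    intro u
    have h1 : ContDiff ℝ 1 (deriv γ) := by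
      have := (contDiff_succ_iff_deriv (n := 1)).mp hγ
      exact this.2.2
    exact (h1.differentiable one_ne_zero u).hasDerivAt
  have key : ∀ i u, ⟪deriv γ u, ν i u⟫ = 0 := by
    intro i u
    have hdf : ∀ v, HasDerivAt (fun t => ⟪deriv γ t, ν i t⟫) 0 v := by
      intro v
      have h := (hdγ v).inner ℝ (hODE i v)
      have hnorm : ‖deriv γ v‖ ^ 2 ≠ 0 := pow_ne_zero _ (ne_of_gt (himm v))
      have hval : ⟪deriv (deriv γ) v, ν i v⟫
          + ⟪deriv γ v, -((⟪ν i v, deriv (deriv γ) v⟫ / ‖deriv γ v‖ ^ 2) • deriv γ v)⟫ = 0 := by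
        rw [inner_neg_right, inner_smul_right, real_inner_self_eq_norm_sq]
        rw [div_mul_cancel₀ _ hnorm, real_inner_comm]
        ring
      exact h.congr_deriv ((add_comm _ _).trans hval)
    have hc : (fun t => ⟪deriv γ t, ν i t⟫) u = (fun t => ⟪deriv γ t, ν i t⟫) 0 :=
      is_const_of_deriv_eq_zero (fun v => (hdf v).differentiableAt)
        (fun v => (hdf v).deriv) u 0
    simpa [hT0 i] using hc
  intro u
  refine ⟨fun i => key i u, fun i j => ?_⟩
  have hdf : ∀ v, HasDerivAt (fun t => ⟪ν i t, ν j t⟫) 0 v := by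
    intro v
    have h := (hODE i v).inner ℝ (hODE j v)
    have h1 : ⟪(-((⟪ν i v, deriv (deriv γ) v⟫ / ‖deriv γ v‖ ^ 2) • deriv γ v)), ν j v⟫
        + ⟪ν i v, (-((⟪ν j v, deriv (deriv γ) v⟫ / ‖deriv γ v‖ ^ 2) • deriv γ v))⟫ = 0 := by
      rw [inner_neg_left, inner_neg_right, inner_smul_left, inner_smul_right]
      have h2 : ⟪deriv γ v, ν j v⟫ = 0 := key j u ▸ key j v
      have h3 : ⟪ν i v, deriv γ v⟫ = 0 := by rw [real_inner_comm]; exact key i v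
      simp [h2, h3]
    exact h.congr_deriv ((add_comm _ _).trans h1)
  have hc : (fun t => ⟪ν i t, ν j t⟫) u = (fun t => ⟪ν i t, ν j t⟫) 0 :=
    is_const_of_deriv_eq_zero (fun v => (hdf v).differentiableAt)
      (fun v => (hdf v).deriv) u 0
  simpa [hON0 i j] using hc
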